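/- arXiv:1905.01261 — 2 statements merged into one kernel-verified Lean document; each statement's English description precedes it below -/
import Mathlib

section
/- Consider the coupled system on ℝⁿ × ℝ: p̃' = (½ − α)r(t) − K p̃ and α' = γ(p̃ᵀ r(t) − (α − ½)(k + |p̃ᵀ r(t)|)), where K is symmetric positive definite, γ, k > 0, and r : ℝ → ℝⁿ is continuous and bounded. Then V(p̃, α) := ½‖p̃‖² + (1/γ)·½(α − ½)² satisfies, along any solution, dV/dt = −(k + |p̃ᵀ r(t)|)(α − ½)² − p̃ᵀ K p̃ ≤ 0. -/
open Matrix
open scoped RealInnerProductSpace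

/-- Lyapunov derivative for the coupled system p̃' = (½−α)r(t) − Kp̃,
α' = γ(p̃ᵀr − (α−½)(k + |p̃ᵀr|)): with V = ½‖p̃‖² + (1/γ)·½(α−½)², along any
solution dV/dt = −(k + |p̃ᵀr|)(α−½)² − p̃ᵀKp̃ ≤ 0. -/
theorem coupled_system_lyapunov_derivative
    {n : ℕ} (K : Matrix (Fin n) (Fin n) ℝ) (hK : K.PosDef)
    (γ k : ℝ) (hγ : 0 < γ) (hk : 0 < k)
    (r : ℝ → EuclideanSpace ℝ (Fin n)) (hrc : Continuous r)
    (hrb : ∃ M : ℝ, ∀ t, ‖r t‖ ≤ M)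
    (p : ℝ → EuclideanSpace ℝ (Fin n)) (α : ℝ → ℝ)
    (hp : ∀ t : ℝ, HasDerivAt p
      ((1/2 - α t) • r t - (EuclideanSpace.equiv (Fin n) ℝ).symm (K.mulVec (p t))) t)
    (hα : ∀ t : ℝ, HasDerivAt α
      (γ * (⟪p t, r t⟫ - (α t - 1/2) * (k + |⟪p t, r t⟫|))) t)
    (V : ℝ → ℝ)
    (hV : ∀ t, V t = (1/2) * ‖p t‖^2 + (1/γ) * ((1/2) * (α t - 1/2)^2)) :
    ∀ t : ℝ,
      HasDerivAt V (-((k + |⟪p t, r t⟫|) * (α t - 1/2)^2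
          + (EuclideanSpace.equiv (Fin n) ℝ) (p t) ⬝ᵥ K.mulVec (p t))) t ∧
      -((k + |⟪p t, r t⟫|) * (α t - 1/2)^2
          + (EuclideanSpace.equiv (Fin n) ℝ) (p t) ⬝ᵥ K.mulVec (p t)) ≤ 0 := by

  intro t
  set d := ((1/2 - α t) • r t - (EuclideanSpace.equiv (Fin n) ℝ).symm (K.mulVec (p t)))
    with hd
  have hQ : ⟪p t, (EuclideanSpace.equiv (Fin n) ℝ).symm (K.mulVec (p t))⟫
      = (EuclideanSpace.equiv (Fin n) ℝ) (p t) ⬝ᵥ K.mulVec (p t) := by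
    simp [PiLp.inner_apply, dotProduct, EuclideanSpace.equiv, mul_comm]
  have hVfun : V = fun t => (1/2) * ⟪p t, p t⟫ + (1/γ) * ((1/2) * (α t - 1/2)^2) := by
    funext s
    rw [hV s, real_inner_self_eq_norm_sq]
  have h1 : HasDerivAt (fun t => ⟪p t, p t⟫) (⟪p t, d⟫ + ⟪d, p t⟫) t :=
    (hp t).inner ℝ (hp t)
  have h2 : HasDerivAt (fun t => (α t - 1/2)^2)
      (2 * (α t - 1/2) ^ 1 * (γ * (⟪p t, r t⟫ - (α t - 1/2) * (k + |⟪p t, r t⟫|)))) t :=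
    ((hα t).sub_const (1/2)).pow 2
  have h3 := ((h1.const_mul (1/2:ℝ)).add ((h2.const_mul (1/2:ℝ)).const_mul (1/γ:ℝ)))
  simp only [Pi.add_def] at h3
  rw [← hVfun] at h3
  have hip : ⟪p t, d⟫ = (1/2 - α t) * ⟪p t, r t⟫
      - (EuclideanSpace.equiv (Fin n) ℝ) (p t) ⬝ᵥ K.mulVec (p t) := by
    rw [hd, inner_sub_right, real_inner_smul_right, hQ]
  have hcomm : ⟪d, p t⟫ = ⟪p t, d⟫ := real_inner_comm _ _
  have key : (1/2:ℝ) * (⟪p t, d⟫ + ⟪d, p t⟫)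
      + (1/γ) * ((1/2) * (2 * (α t - 1/2) ^ 1 * (γ * (⟪p t, r t⟫ - (α t - 1/2) * (k + |⟪p t, r t⟫|)))))
      = -((k + |⟪p t, r t⟫|) * (α t - 1/2)^2
          + (EuclideanSpace.equiv (Fin n) ℝ) (p t) ⬝ᵥ K.mulVec (p t)) := by
    rw [hcomm, hip]
    field_simp
    ring
  rw [key] at h3
  refine ⟨h3, ?_⟩
  have hQ0 : 0 ≤ (EuclideanSpace.equiv (Fin n) ℝ) (p t) ⬝ᵥ K.mulVec (p t) := by
    have := hK.posSemidef.dotProduct_mulVec_nonneg ((EuclideanSpace.equiv (Fin n) ℝ) (p t))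
    simp at this
    exact this
  have h4 : 0 ≤ (k + |⟪p t, r t⟫|) * (α t - 1/2)^2 :=
    mul_nonneg (by positivity) (sq_nonneg _)
  linarith
end

section
/- Consider p̃' = (½ − α)r(t) − K p̃ and the barrier update law α' = γ α(1 − α)(p̃ᵀ r(t) − (α − ½)(k + |p̃ᵀ r(t)|)) with K symmetric positive definite, γ, k > 0, and r continuous and bounded. Then along any solution with α(t₀) ∈ (0,1), the function V = ½‖p̃‖² + (1/γ)V_b(α) satisfies dV/dt = −(k + |p̃ᵀ r(t)|)(α − ½)² − p̃ᵀ K p̃ ≤ 0, where V_b(α) = ½ log(1/(1 − 4(α − ½)²)). -/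
open Matrix
open scoped RealInnerProductSpace

lemma inner_equiv_symm {n : ℕ} (x : EuclideanSpace ℝ (Fin n)) (v : Fin n → ℝ) :
    ⟪x, (EuclideanSpace.equiv (Fin n) ℝ).symm v⟫ =
      (EuclideanSpace.equiv (Fin n) ℝ) x ⬝ᵥ v := by
  simp [PiLp.inner_apply, dotProduct, EuclideanSpace.equiv, mul_comm]

/-- Lemma 2 (Lyapunov derivative): for p̃' = (½−α)r(t) − Kp̃ with the barrier
update law α' = γα(1−α)(p̃ᵀr − (α−½)(k + |p̃ᵀr|)), along a solution with
α(t) ∈ (0,1) the function V = ½‖p̃‖² + (1/γ)V_b(α), with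
V_b(α) = ½log(1/(1−4(α−½)²)), satisfies
dV/dt = −(k + |p̃ᵀr|)(α−½)² − p̃ᵀKp̃ ≤ 0. -/
theorem barrier_coupled_system_lyapunov_derivative
    {n : ℕ} (K : Matrix (Fin n) (Fin n) ℝ) (hK : K.PosDef)
    (γ k : ℝ) (hγ : 0 < γ) (hk : 0 < k)
    (r : ℝ → EuclideanSpace ℝ (Fin n)) (hrc : Continuous r)
    (hrb : ∃ M : ℝ, ∀ t, ‖r t‖ ≤ M)
    (p : ℝ → EuclideanSpace ℝ (Fin n)) (α : ℝ → ℝ)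
    (hmem : ∀ t : ℝ, α t ∈ Set.Ioo (0:ℝ) 1)
    (hp : ∀ t : ℝ, HasDerivAt p
      ((1/2 - α t) • r t - (EuclideanSpace.equiv (Fin n) ℝ).symm (K.mulVec (p t))) t)
    (hα : ∀ t : ℝ, HasDerivAt α
      (γ * (α t) * (1 - α t) *
        (⟪p t, r t⟫ - (α t - 1/2) * (k + |⟪p t, r t⟫|))) t)
    (Vb V : ℝ → ℝ)
    (hVb : ∀ a, Vb a = (1/2) * Real.log (1 / (1 - 4 * (a - 1/2)^2)))
    (hV : ∀ t, V t = (1/2) * ‖p t‖^2 + (1/γ) * Vb (α t)) :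
    ∀ t : ℝ,
      HasDerivAt V (-((k + |⟪p t, r t⟫|) * (α t - 1/2)^2
          + (EuclideanSpace.equiv (Fin n) ℝ) (p t) ⬝ᵥ K.mulVec (p t))) t ∧
      -((k + |⟪p t, r t⟫|) * (α t - 1/2)^2
          + (EuclideanSpace.equiv (Fin n) ℝ) (p t) ⬝ᵥ K.mulVec (p t)) ≤ 0 := by
  intro t
  obtain ⟨ha0, ha1⟩ := hmem t
  set a := α t with ha
  set u := ⟪p t, r t⟫ with hu
  set q : Fin n → ℝ := K.mulVec (p t) with hq
  set p' : EuclideanSpace ℝ (Fin n) :=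
    (1/2 - a) • r t - (EuclideanSpace.equiv (Fin n) ℝ).symm q with hp'
  set a' : ℝ := γ * a * (1 - a) * (u - (a - 1/2) * (k + |u|)) with ha'
  have hg : (0:ℝ) < 1 - 4 * (a - 1/2)^2 := by nlinarith
  -- derivative of the norm part
  have hnorm : HasDerivAt (fun s => (1/2 : ℝ) * ‖p s‖^2)
      ((1/2) * (⟪p t, p'⟫ + ⟪p', p t⟫)) t := by
    have h1 : HasDerivAt (fun s => ⟪p s, p s⟫) (⟪p t, p'⟫ + ⟪p', p t⟫) t :=
      (hp t).inner ℝ (hp t)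
    have h2 : (fun s => (1/2 : ℝ) * ‖p s‖^2) = fun s => (1/2 : ℝ) * ⟪p s, p s⟫ := by
      funext s; rw [real_inner_self_eq_norm_sq]
    rw [h2]
    exact h1.const_mul _
  -- derivative of the barrier part
  have hbar : HasDerivAt (fun s => (1/γ : ℝ) * Vb (α s))
      ((1/γ) * (-(1/2) * ((-(8 * (a - 1/2)) * a') / (1 - 4 * (a - 1/2)^2)))) t := by
    have h2 : (fun s => (1/γ : ℝ) * Vb (α s)) =
        fun s => (1/γ) * (-(1/2) * Real.log (1 - 4 * (α s - 1/2)^2)) := by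
      funext s
      rw [hVb]
      rw [show (1:ℝ) / (1 - 4 * (α s - 1/2)^2) = (1 - 4 * (α s - 1/2)^2)⁻¹ from one_div _, Real.log_inv]
      ring
    rw [h2]
    have hinner : HasDerivAt (fun s => 1 - 4 * (α s - 1/2)^2)
        (-(8 * (a - 1/2)) * a') t := by
      have := ((((hα t).sub_const (1/2)).fun_pow 2).const_mul (4:ℝ)).const_sub 1
      refine this.congr_deriv ?_
      ring
    have hlog := hinner.log (ne_of_gt hg)
    exact ((hlog.const_mul (-(1/2 : ℝ)))).const_mul _
  have hVfun : V = fun s => (1/2 : ℝ) * ‖p s‖^2 + (1/γ) * Vb (α s) := funext hV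
  have htotal := hnorm.add hbar
  rw [show ((fun s => (1/2 : ℝ) * ‖p s‖^2) + fun s => (1/γ) * Vb (α s)) = V from hVfun.symm] at htotal
  have hinner_split : ⟪p t, p'⟫ = (1/2 - a) * u -
      (EuclideanSpace.equiv (Fin n) ℝ) (p t) ⬝ᵥ q := by
    rw [hp', inner_sub_right, real_inner_smul_right, inner_equiv_symm]
  have hsym : ⟪p', p t⟫ = ⟪p t, p'⟫ := real_inner_comm _ _
  constructor
  · refine htotal.congr_deriv ?_
    rw [hsym, hinner_split, ha']
    have hγ' : γ ≠ 0 := ne_of_gt hγ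
    have h4 : 1 - 4 * (a - 1/2)^2 = 4 * (a * (1 - a)) := by ring
    rw [h4]
    have h5 : a * (1 - a) ≠ 0 := ne_of_gt (mul_pos ha0 (by linarith))
    field_simp
    ring
  · have h1 : 0 ≤ (k + |u|) * (a - 1/2)^2 := by positivity
    have h2 : 0 ≤ (EuclideanSpace.equiv (Fin n) ℝ) (p t) ⬝ᵥ q := by
      have := hK.posSemidef.dotProduct_mulVec_nonneg (p t)
      exact this
    linarith
end
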